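/- Let G be a finite group, let U be a subgroup of G, and let A be a subgroup of Aut(G) with Inn(G) ≤ A and |A : Inn(G)| = n. Assume that there exists a minimal A-invariant subgroup L of G that is abelian and satisfies G = UL. If G = ⋃_{a ∈ A} U^a, then |G : U| ≤ n. -/

import Mathlib

/-- Let `G` be a finite group, `U ≤ G`, and `Inn(G) ≤ A ≤ Aut(G)` with `|A : Inn(G)| = n`.
If there is a minimal `A`-invariant subgroup `L` of `G` that is abelian and satisfies
`G = UL`, and `G` is the union of the `A`-conjugates of `U`, then `|G : U| ≤ n`. -/
theorem index_le_of_abelian_minimal_supplement (G : Type*) [Group G] [Finite G]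
    (U : Subgroup G) (A : Subgroup (MulAut G)) (n : ℕ)
    (hInn : (MulAut.conj : G →* MulAut G).range ≤ A)
    (hn : Subgroup.relIndex (MulAut.conj : G →* MulAut G).range A = n)
    (L : Subgroup G)
    (hLne : L ≠ ⊥)
    (hLinv : ∀ a ∈ A, Subgroup.map (MulEquiv.toMonoidHom a) L = L)
    (hLmin : ∀ N : Subgroup G, (∀ a ∈ A, Subgroup.map (MulEquiv.toMonoidHom a) N = N) →
      N < L → N = ⊥)
    (hLab : ∀ x ∈ L, ∀ y ∈ L, x * y = y * x)
    (hUL : ∀ x : G, ∃ u ∈ U, ∃ l ∈ L, u * l = x)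
    (hcov : ∀ x : G, ∃ a ∈ A, ∃ u ∈ U, a u = x) :
    U.index ≤ n := by
  classical
  -- `L` is normal in `G`, since it is invariant under all inner automorphisms.
  have hLnorm : L.Normal := by
    constructor
    intro x hx g
    have h := hLinv (MulAut.conj g) (hInn ⟨g, rfl⟩)
    rw [← h]
    exact ⟨x, hx, rfl⟩
  -- Key lemma: conjugation by any element of `G` fixes `U ⊓ L`,
  -- using `G = UL`, normality of `L`, and commutativity of `L`.
  have keyle : ∀ g : G, (U.map (MulAut.conj g).toMonoidHom) ⊓ L ≤ U ⊓ L := by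
    intro g x hx
    obtain ⟨⟨y, hy, rfl⟩, hxL⟩ := hx
    simp only [MulEquiv.coe_toMonoidHom, MulAut.conj_apply] at hxL ⊢
    obtain ⟨u, hu, l, hl, hul⟩ := hUL g
    have hz : u⁻¹ * (g * y * g⁻¹) * u ∈ L := by
      have := hLnorm.conj_mem _ hxL u⁻¹
      simpa using this
    have hyz : y = u⁻¹ * (g * y * g⁻¹) * u := by
      have h1 : l * (u⁻¹ * (g * y * g⁻¹) * u) = (u⁻¹ * (g * y * g⁻¹) * u) * l :=
        hLab _ hl _ hz
      calc y = l⁻¹ * (u⁻¹ * ((u * l) * y * (u * l)⁻¹) * u) * l := by group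
        _ = l⁻¹ * (u⁻¹ * (g * y * g⁻¹) * u) * l := by rw [hul]
        _ = u⁻¹ * (g * y * g⁻¹) * u := by rw [mul_assoc, ← h1]; group
    have hX : u * y * u⁻¹ = g * y * g⁻¹ := by
      conv_lhs => rw [hyz]
      group
    refine ⟨?_, hxL⟩
    show g * y * g⁻¹ ∈ U
    rw [← hX]
    exact U.mul_mem (U.mul_mem hu hy) (U.inv_mem hu)
  have key : ∀ g : G, (U.map (MulAut.conj g).toMonoidHom) ⊓ L = U ⊓ L := by
    intro g
    refine le_antisymm (keyle g) ?_
    rintro x ⟨hxU, hxL⟩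
    have hyL : (MulAut.conj g⁻¹) x ∈ L := hLnorm.conj_mem x hxL g⁻¹
    have hyUL : (MulAut.conj g⁻¹) x ∈ U ⊓ L :=
      keyle g⁻¹ ⟨⟨x, hxU, rfl⟩, hyL⟩
    refine ⟨⟨(MulAut.conj g⁻¹) x, hyUL.1, ?_⟩, hxL⟩
    show g * (g⁻¹ * x * g⁻¹⁻¹) * g⁻¹ = x
    group
  -- `L` is also a supplement for every `A`-conjugate of `U`.
  have hUaL : ∀ a : A, ∀ x : G,
      ∃ u ∈ U.map ((a : MulAut G)).toMonoidHom, ∃ l ∈ L, u * l = x := by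
    intro a x
    obtain ⟨u, hu, l, hl, hul⟩ := hUL ((a : MulAut G)⁻¹ x)
    refine ⟨(a : MulAut G) u, ⟨u, hu, rfl⟩, (a : MulAut G) l, ?_, ?_⟩
    · rw [← hLinv (a : MulAut G) a.2]; exact ⟨l, hl, rfl⟩
    · have : (a : MulAut G) (u * l) = x := by rw [hul]; simp
      rw [← this]; simp
  set H := (MulAut.conj : G →* MulAut G).range.subgroupOf A with hH
  -- `U^a ⊓ L` only depends on the coset of `a` modulo inner automorphisms.
  have welldef : ∀ a b : A, (QuotientGroup.mk a : A ⧸ H) = QuotientGroup.mk b →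
      U.map ((b : MulAut G)).toMonoidHom ⊓ L = U.map ((a : MulAut G)).toMonoidHom ⊓ L := by
    intro a b hab
    have hmem : a⁻¹ * b ∈ H := QuotientGroup.eq.mp hab
    obtain ⟨g, hg⟩ := Subgroup.mem_subgroupOf.mp hmem
    have hbval : (b : MulAut G) = (a : MulAut G) * MulAut.conj g := by
      rw [hg]; simp [mul_assoc]
    have hcomp : (b : MulAut G).toMonoidHom
        = ((a : MulAut G)).toMonoidHom.comp (MulAut.conj g).toMonoidHom := by
      ext x
      rw [hbval]
      rfl
    have hmapb : U.map ((b : MulAut G)).toMonoidHom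
        = (U.map (MulAut.conj g).toMonoidHom).map ((a : MulAut G)).toMonoidHom := by
      rw [Subgroup.map_map, hcomp]
    calc U.map ((b : MulAut G)).toMonoidHom ⊓ L
        = (U.map (MulAut.conj g).toMonoidHom).map ((a : MulAut G)).toMonoidHom
            ⊓ L.map ((a : MulAut G)).toMonoidHom := by
          rw [hmapb, hLinv (a : MulAut G) a.2]
      _ = ((U.map (MulAut.conj g).toMonoidHom) ⊓ L).map ((a : MulAut G)).toMonoidHom :=
          (Subgroup.map_inf _ _ _ (a : MulAut G).injective).symm
      _ = (U ⊓ L).map ((a : MulAut G)).toMonoidHom := by rw [key g]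
      _ = U.map ((a : MulAut G)).toMonoidHom ⊓ L.map ((a : MulAut G)).toMonoidHom :=
          Subgroup.map_inf _ _ _ (a : MulAut G).injective
      _ = U.map ((a : MulAut G)).toMonoidHom ⊓ L := by rw [hLinv (a : MulAut G) a.2]
  have hQcard : Nat.card (A ⧸ H) = n := hn
  have : Fintype (A ⧸ H) := Fintype.ofFinite _
  set F : A ⧸ H → Subgroup G :=
    fun q => U.map ((q.out : MulAut G)).toMonoidHom ⊓ L with hFdef
  have hF : ∀ a : A, U.map ((a : MulAut G)).toMonoidHom ⊓ L = F (QuotientGroup.mk a) := by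
    intro a
    exact welldef _ a (QuotientGroup.out_eq' (QuotientGroup.mk a))
  -- the subgroups `F q` cover `L`
  have hcover : ∀ x ∈ L, ∃ q : A ⧸ H, x ∈ F q := by
    intro x hx
    obtain ⟨a, ha, u, hu, hau⟩ := hcov x
    exact ⟨QuotientGroup.mk ⟨a, ha⟩, (hF ⟨a, ha⟩) ▸ ⟨⟨u, hu, hau⟩, hx⟩⟩
  -- each `F q` has index (at least) `U.index` in `L`
  have hbound : ∀ q : A ⧸ H, U.index * Nat.card (F q) ≤ Nat.card L := by
    intro q
    set a : MulAut G := ((q.out : A) : MulAut G) with hadef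
    set S : Subgroup G := U.map a.toMonoidHom with hS
    have hSindex : S.index = U.index :=
      Subgroup.index_map_eq U a.surjective
        (by rw [(MonoidHom.ker_eq_bot_iff (a.toMonoidHom)).mpr a.injective]; exact bot_le)
    have hcard1 : Nat.card (F q) = Nat.card (S.subgroupOf L) := by
      rw [show F q = S ⊓ L from rfl, ← Subgroup.inf_subgroupOf_right]
      exact (Nat.card_congr (Subgroup.subgroupOfEquivOfLe inf_le_right).toEquiv).symm
    let φ : L ⧸ S.subgroupOf L → G ⧸ S := Quotient.map' Subtype.val (by
      intro l1 l2 h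
      rw [QuotientGroup.leftRel_apply] at h ⊢
      simpa using Subgroup.mem_subgroupOf.mp h)
    have hφ : Function.Surjective φ := by
      intro x
      refine QuotientGroup.induction_on x ?_
      intro g
      obtain ⟨u, hu, l, hl, hul⟩ := hUaL q.out g
      have hmem : u * l * u⁻¹ ∈ L := hLnorm.conj_mem l hl u
      refine ⟨QuotientGroup.mk ⟨u * l * u⁻¹, hmem⟩, ?_⟩
      show QuotientGroup.mk (u * l * u⁻¹) = QuotientGroup.mk g
      rw [QuotientGroup.eq, ← hul]
      have h2 : (u * l * u⁻¹)⁻¹ * (u * l) = u := by group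
      rw [h2]; exact hu
    have hle : S.index ≤ (S.subgroupOf L).index := by
      rw [Subgroup.index_eq_card, Subgroup.index_eq_card]
      exact Nat.card_le_card_of_surjective φ hφ
    calc U.index * Nat.card (F q) = S.index * Nat.card (S.subgroupOf L) := by
          rw [hSindex, hcard1]
      _ ≤ (S.subgroupOf L).index * Nat.card (S.subgroupOf L) :=
          Nat.mul_le_mul_right _ hle
      _ = Nat.card L := Subgroup.index_mul_card _
  -- counting: `L` is covered by `n` subgroups of index `U.index`
  have : Fintype G := Fintype.ofFinite G
  have hLsub : (L : Set G).toFinset ⊆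
      Finset.univ.biUnion (fun q => ((F q : Subgroup G) : Set G).toFinset) := by
    intro x hx
    rw [Set.mem_toFinset] at hx
    obtain ⟨q, hq⟩ := hcover x hx
    simp only [Finset.mem_biUnion]
    exact ⟨q, Finset.mem_univ q, Set.mem_toFinset.mpr hq⟩
  have h1 : Nat.card L ≤ ∑ q : A ⧸ H, Nat.card (F q) := by
    calc Nat.card L = (L : Set G).toFinset.card := by
          simp [Set.toFinset_card, Nat.card_eq_fintype_card]
      _ ≤ ∑ q : A ⧸ H, ((F q : Subgroup G) : Set G).toFinset.card :=
          (Finset.card_le_card hLsub).trans Finset.card_biUnion_le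
      _ = ∑ q : A ⧸ H, Nat.card (F q) := by
          refine Finset.sum_congr rfl fun q _ => ?_
          simp [Set.toFinset_card, Nat.card_eq_fintype_card]
  have hfinal : U.index * Nat.card L ≤ n * Nat.card L := by
    calc U.index * Nat.card L ≤ U.index * ∑ q : A ⧸ H, Nat.card (F q) :=
          Nat.mul_le_mul_left _ h1
      _ = ∑ q : A ⧸ H, U.index * Nat.card (F q) := Finset.mul_sum _ _ _
      _ ≤ ∑ _q : A ⧸ H, Nat.card L := Finset.sum_le_sum fun q _ => hbound q
      _ = (Fintype.card (A ⧸ H)) * Nat.card L := by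
          rw [Finset.sum_const, smul_eq_mul, Finset.card_univ]
      _ = n * Nat.card L := by rw [← Nat.card_eq_fintype_card, hQcard]
  exact Nat.le_of_mul_le_mul_right hfinal Nat.card_pos
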